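/- Suppose unit vectors {U_j}, {V_i} in R^d form a margin-m relative-bias-0 embedding of S_{n,k} with 0 < m < 1. Then for every T ⊂ [n] with max(1, k − 2m(n−k)/(1−m)) ≤ |T| ≤ k, there exist a unit vector h ∈ R^d and c ∈ R such that ⟨h, V_i⟩ ≥ c for all i ∈ T and ⟨h, V_j⟩ ≤ c for all j ∉ T. -/
import Mathlib

open RealInnerProductSpace

lemma card_aux {n k : ℕ} (T G : Finset (Fin n)) (hTG : T ⊆ G) (hTk : T.card ≤ k) :
    (Finset.univ.filter fun S : {S : Finset (Fin n) // S.card = k} => T ⊆ S.1 ∧ S.1 ⊆ G).card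
      = (G.card - T.card).choose (k - T.card) := by
  rw [← Finset.card_sdiff_of_subset hTG, ← Finset.card_powersetCard (k - T.card) (G \ T)]
  apply Finset.card_bij (fun S _ => S.1 \ T)
  · rintro ⟨S, hS⟩ hmem
    simp only [Finset.mem_filter] at hmem
    obtain ⟨-, hTS, hSG⟩ := hmem
    rw [Finset.mem_powersetCard]
    exact ⟨Finset.sdiff_subset_sdiff hSG Finset.Subset.rfl, by rw [Finset.card_sdiff_of_subset hTS, hS]⟩
  · rintro ⟨S₁, h₁⟩ hm₁ ⟨S₂, h₂⟩ hm₂ heq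
    simp only [Finset.mem_filter] at hm₁ hm₂
    apply Subtype.ext
    have e1 := Finset.sdiff_union_of_subset hm₁.2.1
    have e2 := Finset.sdiff_union_of_subset hm₂.2.1
    simp only at heq
    show S₁ = S₂
    rw [← e1, ← e2, heq]
  · intro A hA
    rw [Finset.mem_powersetCard] at hA
    obtain ⟨hAsub, hAcard⟩ := hA
    have hdisj : Disjoint A T := (Finset.sdiff_disjoint.mono_left hAsub)
    have hcard : (A ∪ T).card = k := by
      rw [Finset.card_union_of_disjoint hdisj, hAcard]
      omega
    refine ⟨⟨A ∪ T, hcard⟩, ?_, ?_⟩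
    · simp only [Finset.mem_filter]
      exact ⟨Finset.mem_univ _, Finset.subset_union_right, Finset.union_subset ((hAsub.trans (Finset.sdiff_subset))) hTG⟩
    · simp only
      rw [Finset.union_sdiff_cancel_right ?_]
      exact hdisj

set_option maxHeartbeats 1600000 in
theorem stmt14 {n k d : ℕ} (m : ℝ) (hm0 : 0 < m) (hm1 : m < 1)
    (U : {S : Finset (Fin n) // S.card = k} → EuclideanSpace ℝ (Fin d))
    (V : Fin n → EuclideanSpace ℝ (Fin d))
    (hU : ∀ S, ‖U S‖ = 1) (hV : ∀ i, ‖V i‖ = 1)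
    (hpos : ∀ S i, i ∈ S.1 → m ≤ ⟪U S, V i⟫)
    (hneg : ∀ S i, i ∉ S.1 → ⟪U S, V i⟫ ≤ -m)
    (T : Finset (Fin n)) (hThigh : T.card ≤ k)
    (hTlow : max 1 ((k : ℝ) - 2 * m * ((n : ℝ) - (k : ℝ)) / (1 - m)) ≤ (T.card : ℝ)) :
    ∃ (h : EuclideanSpace ℝ (Fin d)) (c : ℝ), ‖h‖ = 1 ∧
      (∀ i ∈ T, c ≤ ⟪h, V i⟫) ∧ (∀ j ∉ T, ⟪h, V j⟫ ≤ c) := by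
  classical
  have hm1' : 0 < 1 - m := by linarith
  have htn : T.card ≤ n := by
    simpa using Finset.card_le_univ T
  have ht1 : 1 ≤ T.card := by
    have := (le_max_left 1 ((k : ℝ) - 2 * m * ((n : ℝ) - (k : ℝ)) / (1 - m))).trans hTlow
    exact_mod_cast this
  have hkey : ((k:ℝ) - T.card) * (1 - m) ≤ 2 * m * ((n:ℝ) - k) := by
    have h2 : (k:ℝ) - 2 * m * ((n : ℝ) - (k : ℝ)) / (1 - m) ≤ T.card :=
      (le_max_right _ _).trans hTlow
    have h3 : ((k:ℝ) - T.card) ≤ 2 * m * ((n:ℝ) - k) / (1 - m) := by linarith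
    rwa [le_div_iff₀ hm1'] at h3
  have hkn : k ≤ n := by
    by_contra hc
    push_neg at hc
    have h1 : (0:ℝ) ≤ (k:ℝ) - T.card := by
      have : (T.card : ℝ) ≤ k := by exact_mod_cast hThigh
      linarith
    have h2 : ((n:ℝ) - k) < 0 := by
      have : (n:ℝ) < k := by exact_mod_cast hc
      linarith
    nlinarith
  set 𝒜 := Finset.univ.filter (fun S : {S : Finset (Fin n) // S.card = k} => T ⊆ S.1) with h𝒜
  have hN : 𝒜.card = (n - T.card).choose (k - T.card) := by
    have h := card_aux (k := k) T Finset.univ (Finset.subset_univ T) hThigh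
    simp only [Finset.card_univ, Fintype.card_fin] at h
    rw [← h]
    congr 1
    ext S
    simp [h𝒜]
  have hNpos : 0 < 𝒜.card := by
    rw [hN]
    exact Nat.choose_pos (by omega)
  set h₀ : EuclideanSpace ℝ (Fin d) := ∑ S ∈ 𝒜, U S with hh₀
  have hinner : ∀ w, ⟪h₀, w⟫ = ∑ S ∈ 𝒜, ⟪U S, w⟫ := fun w => sum_inner 𝒜 (fun S => U S) w
  have hTmem : ∀ i ∈ T, (𝒜.card : ℝ) * m ≤ ⟪h₀, V i⟫ := by
    intro i hi
    rw [hinner]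
    calc (𝒜.card : ℝ) * m = ∑ S ∈ 𝒜, m := by rw [Finset.sum_const, nsmul_eq_mul]
    _ ≤ ∑ S ∈ 𝒜, ⟪U S, V i⟫ := by
        apply Finset.sum_le_sum
        intro S hS
        exact hpos S i ((Finset.mem_filter.mp hS).2 hi)
  have hout : ∀ j ∉ T, ⟪h₀, V j⟫ ≤ (𝒜.card : ℝ) * m := by
    intro j hj
    set A1 := 𝒜.filter (fun S => j ∈ S.1) with hA1
    set A2 := 𝒜.filter (fun S => ¬ (j ∈ S.1)) with hA2
    have hcard : A1.card + A2.card = 𝒜.card :=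
      Finset.card_filter_add_card_filter_not (s := 𝒜)
        (p := fun S : {S : Finset (Fin n) // S.card = k} => j ∈ S.1)
    have hsum : ⟪h₀, V j⟫ ≤ (A1.card : ℝ) * 1 + (A2.card : ℝ) * (-m) := by
      rw [hinner, ← Finset.sum_filter_add_sum_filter_not 𝒜 (fun S => j ∈ S.1)]
      apply add_le_add
      · calc ∑ S ∈ A1, ⟪U S, V j⟫ ≤ ∑ S ∈ A1, (1:ℝ) := by
              apply Finset.sum_le_sum
              intro S _
              calc ⟪U S, V j⟫ ≤ ‖U S‖ * ‖V j‖ := real_inner_le_norm _ _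
              _ = 1 := by rw [hU, hV]; ring
            _ = (A1.card : ℝ) * 1 := by rw [Finset.sum_const, nsmul_eq_mul]
      · calc ∑ S ∈ A2, ⟪U S, V j⟫ ≤ ∑ S ∈ A2, (-m) := by
              apply Finset.sum_le_sum
              intro S hS
              exact hneg S j (Finset.mem_filter.mp hS).2
            _ = (A2.card : ℝ) * (-m) := by rw [Finset.sum_const, nsmul_eq_mul]
    have hkey2 : (A1.card : ℝ) * (1 - m) ≤ 2 * m * A2.card := by
      rcases eq_or_lt_of_le hThigh with heq | hlt
      · -- T.card = k : A1 is empty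
        have hA1empty : A1 = ∅ := by
          rw [Finset.eq_empty_iff_forall_notMem]
          rintro S hS
          rw [hA1, Finset.mem_filter, h𝒜, Finset.mem_filter] at hS
          obtain ⟨⟨-, hTS⟩, hjS⟩ := hS
          have : S.1 = T := (Finset.eq_of_subset_of_card_le hTS (by rw [S.2, heq])).symm
          rw [this] at hjS
          exact hj hjS
        rw [hA1empty]
        simp
        positivity
      · -- T.card < k
        have hc1 : A1.card = (n - (T.card + 1)).choose (k - (T.card + 1)) := by
          have h := card_aux (k := k) (insert j T) Finset.univ (Finset.subset_univ _)
            (by rw [Finset.card_insert_of_notMem hj]; omega)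
          rw [Finset.card_insert_of_notMem hj] at h
          simp only [Finset.card_univ, Fintype.card_fin] at h
          rw [← h]
          congr 1
          ext S
          simp only [hA1, h𝒜, Finset.mem_filter, Finset.mem_univ, true_and,
            Finset.insert_subset_iff, Finset.subset_univ, and_true]
          tauto
        have hc2 : A2.card = (n - 1 - T.card).choose (k - T.card) := by
          have hjT : T ⊆ Finset.univ.erase j := by
            intro x hx
            refine Finset.mem_erase.mpr ⟨?_, Finset.mem_univ x⟩
            rintro rfl; exact hj hx
          have h := card_aux (k := k) T (Finset.univ.erase j) hjT hThigh
          rw [Finset.card_erase_of_mem (Finset.mem_univ j)] at h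
          simp only [Finset.card_univ, Fintype.card_fin] at h
          rw [← h]
          congr 1
          ext S
          simp only [hA2, h𝒜, Finset.mem_filter, Finset.mem_univ, true_and,
            Finset.subset_erase, Finset.subset_univ, true_and]
        have hnat : A2.card * (k - T.card) = A1.card * (n - k) := by
          rw [hc1, hc2]
          have e1 : n - 1 - T.card = n - (T.card + 1) := by omega
          have e2 : k - T.card = (k - (T.card + 1)) + 1 := by omega
          have e3 : n - (T.card + 1) - (k - (T.card + 1)) = n - k := by omega
          rw [e1, e2, ← e3]
          exact Nat.choose_succ_right_eq _ _
        have hnk : (0:ℝ) < (n:ℝ) - k := by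
          have h1 : (1:ℝ) ≤ (k:ℝ) - T.card := by
            have : (T.card : ℝ) + 1 ≤ k := by exact_mod_cast hlt
            linarith
          nlinarith
        have hreal : (A2.card : ℝ) * ((k:ℝ) - T.card) = (A1.card : ℝ) * ((n:ℝ) - k) := by
          have h2 := congrArg (Nat.cast : ℕ → ℝ) hnat
          push_cast [Nat.cast_sub hThigh, Nat.cast_sub hkn] at h2
          linarith [h2]
        nlinarith [mul_le_mul_of_nonneg_left hkey (Nat.cast_nonneg A2.card : (0:ℝ) ≤ A2.card)]
    have : (A1.card : ℝ) * 1 + (A2.card : ℝ) * (-m) ≤ ((A1.card : ℝ) + A2.card) * m := by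
      nlinarith [hkey2]
    calc ⟪h₀, V j⟫ ≤ (A1.card : ℝ) * 1 + (A2.card : ℝ) * (-m) := hsum
    _ ≤ ((A1.card : ℝ) + A2.card) * m := this
    _ = (𝒜.card : ℝ) * m := by rw [← hcard]; push_cast; ring
  have hne : h₀ ≠ 0 := by
    obtain ⟨i, hi⟩ := Finset.card_pos.mp (by omega : 0 < T.card)
    intro h0
    have h1 := hTmem i hi
    rw [h0, inner_zero_left] at h1
    have h2 : (0:ℝ) < (𝒜.card : ℝ) * m := by
      apply mul_pos _ hm0
      exact_mod_cast hNpos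
    linarith
  have hnorm : (0:ℝ) < ‖h₀‖ := norm_pos_iff.mpr hne
  refine ⟨‖h₀‖⁻¹ • h₀, ‖h₀‖⁻¹ * ((𝒜.card : ℝ) * m), ?_, ?_, ?_⟩
  · rw [norm_smul, norm_inv, norm_norm, inv_mul_cancel₀ (ne_of_gt hnorm)]
  · intro i hi
    rw [real_inner_smul_left]
    exact mul_le_mul_of_nonneg_left (hTmem i hi) (inv_nonneg.mpr (le_of_lt hnorm))
  · intro j hj
    rw [real_inner_smul_left]
    exact mul_le_mul_of_nonneg_left (hout j hj) (inv_nonneg.mpr (le_of_lt hnorm))
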